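/- Solving the recursions in the complexity bound: let d ≥ 1, c ≥ 1, and suppose nonnegative integer sequences n_U(t), indexed by subsets U ⊆ {1,…,d} and t ∈ ℕ, satisfy n_{{1,…,d}}(t) = 1 for all t, n_U(1) ≤ c·∏_{i∉U} m_i for constants m_i ≥ 1, and n_U(t+1) ≤ n_U(t) + c·Σ_{i∉U} m_i · n_{U∪{i}}(t). Then for every U with #({1,…,d} \ U) = k and every t ∈ ℕ, n_U(t) ≤ c^k · t^k · ∏_{i∉U} m_i. -/

import Mathlib

lemma stmt12_pow_aux : ∀ k t : ℕ, 1 ≤ t →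
    t ^ (k + 1) + (k + 1) * t ^ k ≤ (t + 1) ^ (k + 1) := by
  intro k
  induction k with
  | zero => intro t _; simp
  | succ k ih =>
    intro t ht
    have h1 := ih t ht
    have h2 : (t + 1) * (t ^ (k + 1) + (k + 1) * t ^ k) ≤ (t + 1) ^ (k + 2) := by
      calc (t + 1) * (t ^ (k + 1) + (k + 1) * t ^ k)
          ≤ (t + 1) * (t + 1) ^ (k + 1) := Nat.mul_le_mul_left _ h1
        _ = (t + 1) ^ (k + 2) := by ring
    refine le_trans ?_ h2
    have : (t + 1) * (t ^ (k + 1) + (k + 1) * t ^ k)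
        = (t ^ (k + 2) + (k + 2) * t ^ (k + 1)) + ((k + 1) * t ^ k) := by ring
    rw [this]
    exact Nat.le_add_right _ _

/-- solving the chain of degeneracy recursions.  If
`n_{{1,…,d}}(t) = 1`, `n_U(1) ≤ c ∏_{i∉U} m_i`, and
`n_U(t+1) ≤ n_U(t) + c Σ_{i∉U} m_i n_{U∪{i}}(t)`, with `c, m_i ≥ 1`, then
`n_U(t) ≤ c^k t^k ∏_{i∉U} m_i` where `k = #({1,…,d} ∖ U)`. -/
theorem stmt_12 (d : ℕ) (hd : 1 ≤ d) (c : ℕ) (hc : 1 ≤ c)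
    (m : Fin d → ℕ) (hm : ∀ i, 1 ≤ m i)
    (n : Finset (Fin d) → ℕ → ℕ)
    (hfull : ∀ t : ℕ, n Finset.univ t = 1)
    (hbase : ∀ U : Finset (Fin d), n U 1 ≤ c * ∏ i ∈ Uᶜ, m i)
    (hrec : ∀ (U : Finset (Fin d)) (t : ℕ), 1 ≤ t →
      n U (t + 1) ≤ n U t + c * ∑ i ∈ Uᶜ, m i * n (insert i U) t) :
    ∀ (U : Finset (Fin d)) (t : ℕ), 1 ≤ t →
      n U t ≤ c ^ Uᶜ.card * t ^ Uᶜ.card * ∏ i ∈ Uᶜ, m i := by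
  have key : ∀ k : ℕ, ∀ U : Finset (Fin d), Uᶜ.card = k → ∀ t : ℕ, 1 ≤ t →
      n U t ≤ c ^ k * t ^ k * ∏ i ∈ Uᶜ, m i := by
    intro k
    induction k using Nat.strong_induction_on with
    | _ k ih =>
      intro U hU t ht
      match k, hU with
      | 0, hU =>
        have hUc : Uᶜ = ∅ := Finset.card_eq_zero.mp hU
        have hUu : U = Finset.univ := by
          rwa [Finset.compl_eq_empty_iff] at hUc
        subst hUu
        rw [hfull]
        simp [hUc]
      | k + 1, hU =>
        induction t, ht using Nat.le_induction with
        | base =>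
          calc n U 1 ≤ c * ∏ i ∈ Uᶜ, m i := hbase U
            _ ≤ c ^ (k+1) * 1 ^ (k+1) * ∏ i ∈ Uᶜ, m i := by
                have : c ≤ c ^ (k+1) := Nat.le_self_pow (by omega) c
                simpa using Nat.mul_le_mul_right _ this
        | succ t ht iht =>
          have iht' := iht
          have hsum : ∀ i ∈ Uᶜ, m i * n (insert i U) t
              ≤ c ^ k * t ^ k * ∏ j ∈ Uᶜ, m j := by
            intro i hi
            have hins : (insert i U)ᶜ = Uᶜ.erase i := Finset.compl_insert
            have hcard : (insert i U)ᶜ.card = k := by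
              rw [hins, Finset.card_erase_of_mem hi, hU]; omega
            have h1 := ih k (Nat.lt_succ_self k) (insert i U) hcard t (by omega)
            rw [hins] at h1
            calc m i * n (insert i U) t
                ≤ m i * (c ^ k * t ^ k * ∏ j ∈ Uᶜ.erase i, m j) :=
                  Nat.mul_le_mul_left _ h1
              _ = c ^ k * t ^ k * (m i * ∏ j ∈ Uᶜ.erase i, m j) := by ring
              _ = c ^ k * t ^ k * ∏ j ∈ Uᶜ, m j := by
                  rw [Finset.mul_prod_erase _ _ hi]
          have hsum2 : ∑ i ∈ Uᶜ, m i * n (insert i U) t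
              ≤ (k + 1) * (c ^ k * t ^ k * ∏ j ∈ Uᶜ, m j) := by
            calc ∑ i ∈ Uᶜ, m i * n (insert i U) t
                ≤ ∑ _i ∈ Uᶜ, c ^ k * t ^ k * ∏ j ∈ Uᶜ, m j :=
                  Finset.sum_le_sum hsum
              _ = Uᶜ.card * (c ^ k * t ^ k * ∏ j ∈ Uᶜ, m j) := by
                  rw [Finset.sum_const, smul_eq_mul]
              _ = (k + 1) * (c ^ k * t ^ k * ∏ j ∈ Uᶜ, m j) := by rw [hU]
          calc n U (t + 1) ≤ n U t + c * ∑ i ∈ Uᶜ, m i * n (insert i U) t :=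
                hrec U t ht
            _ ≤ c ^ (k+1) * t ^ (k+1) * ∏ i ∈ Uᶜ, m i
                + c * ((k + 1) * (c ^ k * t ^ k * ∏ j ∈ Uᶜ, m j)) :=
                Nat.add_le_add iht' (Nat.mul_le_mul_left _ hsum2)
            _ = c ^ (k+1) * (t ^ (k+1) + (k+1) * t ^ k) * ∏ i ∈ Uᶜ, m i := by
                ring
            _ ≤ c ^ (k+1) * (t+1) ^ (k+1) * ∏ i ∈ Uᶜ, m i := by
                have := stmt12_pow_aux k t ht
                exact Nat.mul_le_mul_right _ (Nat.mul_le_mul_left _ this)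
  intro U t ht
  exact key Uᶜ.card U rfl t ht
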